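/- The Lobachevsky function Λ is continuous on all of ℝ. -/

import Mathlib

open MeasureTheory Real Set

lemma abs_log_le (x : ℝ) (hx : 0 < x) :
    |Real.log x| ≤ 2 * x ^ ((1:ℝ)/2) + 2 * x ^ (-(1:ℝ)/2) := by
  have h1 : (0:ℝ) < x ^ ((1:ℝ)/2) := Real.rpow_pos_of_pos hx _
  have h2 : (0:ℝ) < x ^ (-(1:ℝ)/2) := Real.rpow_pos_of_pos hx _
  have l1 : Real.log (x ^ ((1:ℝ)/2)) ≤ x ^ ((1:ℝ)/2) - 1 := Real.log_le_sub_one_of_pos h1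
  have l2 : Real.log (x ^ (-(1:ℝ)/2)) ≤ x ^ (-(1:ℝ)/2) - 1 := Real.log_le_sub_one_of_pos h2
  rw [Real.log_rpow hx] at l1 l2
  rw [abs_le]
  constructor <;> nlinarith

lemma intervalIntegrable_log' (a b : ℝ) :
    IntervalIntegrable Real.log volume a b := by
  suffices h : ∀ c : ℝ, 0 ≤ c → IntervalIntegrable Real.log volume 0 c by
    have hc : ∀ c : ℝ, IntervalIntegrable Real.log volume 0 c := by
      intro c
      rcases le_total 0 c with hc | hc
      · exact h c hc
      · rw [IntervalIntegrable.iff_comp_neg, neg_zero]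
        have := h (-c) (by linarith)
        refine this.congr (fun x _ => ?_)
        simp [Real.log_neg_eq_log]
      -- end
    exact (hc a).symm.trans (hc b)
  intro c hc
  have hint : IntervalIntegrable
      (fun x : ℝ => 2 * x ^ ((1:ℝ)/2) + 2 * x ^ (-(1:ℝ)/2)) volume 0 c := by
    exact ((intervalIntegral.intervalIntegrable_rpow' (by norm_num)).const_mul 2).add
      ((intervalIntegral.intervalIntegrable_rpow' (by norm_num)).const_mul 2)
  refine hint.mono_fun Real.measurable_log.aestronglyMeasurable ?_
  filter_upwards [MeasureTheory.ae_restrict_mem measurableSet_uIoc] with x hx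
  rw [Set.uIoc_of_le hc] at hx
  have hx0 : 0 < x := hx.1
  have := abs_log_le x hx0
  rw [Real.norm_eq_abs, Real.norm_eq_abs]
  refine this.trans (le_abs_self _)

lemma intervalIntegrable_log_abs_sub (c a b : ℝ) :
    IntervalIntegrable (fun t => Real.log |t - c|) volume a b := by
  have : IntervalIntegrable (fun t => Real.log (t - c)) volume a b := by
    have := (intervalIntegrable_log' (a - c) (b - c)).comp_sub_right c
    simpa using this
  refine this.congr (fun t _ => ?_)
  show Real.log (t - c) = Real.log |t - c|
  rw [Real.log_abs]

lemma measurable_f : Measurable (fun t : ℝ => Real.log |2 * Real.sin t|) :=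
  Real.measurable_log.comp ((continuous_abs.comp
    (continuous_const.mul Real.continuous_sin)).measurable)

lemma locallyIntegrable_f :
    LocallyIntegrable (fun t : ℝ => Real.log |2 * Real.sin t|) volume := by
  intro x
  by_cases hs : Real.sin x = 0
  · -- near a zero of sin
    refine ⟨Set.Ioo (x - π/2) (x + π/2), Ioo_mem_nhds (by linarith [pi_pos]) (by linarith [pi_pos]), ?_⟩
    have hcos : |Real.cos x| = 1 := by
      have h0 := Real.sin_sq_add_cos_sq x
      rw [hs] at h0
      have h2 : (Real.cos x - 1) * (Real.cos x + 1) = 0 := by nlinarith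
      rcases mul_eq_zero.1 h2 with h | h
      · rw [abs_of_nonneg (by linarith)]; linarith
      · rw [abs_of_nonpos (by linarith)]; linarith
    have key : ∀ t : ℝ, |Real.sin t| = |Real.sin (t - x)| := by
      intro t
      have : Real.sin t = Real.sin ((t - x) + x) := by ring_nf
      rw [this, Real.sin_add, hs, mul_zero, add_zero, abs_mul, hcos, mul_one]
    -- dominate
    have hg : IntegrableOn
        (fun t => abs (Real.log |t - x|) + Real.log 2) (Set.Ioo (x - π/2) (x + π/2)) volume := by
      have h1 : IntervalIntegrable (fun t => Real.log |t - x|) volume (x - π/2) (x + π/2) :=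
        intervalIntegrable_log_abs_sub x _ _
      rw [intervalIntegrable_iff, Set.uIoc_of_le (by linarith [pi_pos])] at h1
      have h2 := h1.norm
      have : IntegrableOn (fun t => abs (Real.log |t - x|) + Real.log 2)
          (Set.Ioc (x - π/2) (x + π/2)) volume := by
        have h4 := h2.add (show IntegrableOn (fun _ : ℝ => Real.log 2)
            (Set.Ioc (x - π/2) (x + π/2)) volume from
          integrableOn_const (by simp))
        exact h4
      exact this.mono_set Set.Ioo_subset_Ioc_self
    refine hg.integrable.mono' measurable_f.aestronglyMeasurable ?_
    filter_upwards [MeasureTheory.ae_restrict_mem measurableSet_Ioo] with t ht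
    rw [Real.norm_eq_abs]
    set u := t - x with hu
    have hub : |u| ≤ π / 2 := by
      rw [abs_le]
      constructor <;> [linarith [ht.1]; linarith [ht.2]]
    have hsin : |2 * Real.sin t| = 2 * |Real.sin u| := by
      rw [abs_mul, key t, abs_two]
    have hlog2 : (0:ℝ) ≤ Real.log 2 := Real.log_nonneg one_le_two
    by_cases hu0 : u = 0
    · have hst : Real.sin t = 0 := by
        have h := key t
        rw [← hu, hu0] at h
        simpa using h
      have hz : Real.log |2 * Real.sin t| = 0 := by simp [hst]
      rw [hz, abs_zero]
      have := abs_nonneg (Real.log |t - x|)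
      linarith
    · have habs : 0 < |u| := abs_pos.2 hu0
      have hlow : |u| ≤ 2 * |Real.sin u| := by
        have h5 := Real.mul_abs_le_abs_sin hub
        rw [div_mul_eq_mul_div, div_le_iff₀ Real.pi_pos] at h5
        nlinarith [mul_le_mul_of_nonneg_left Real.pi_le_four (abs_nonneg (Real.sin u))]
      have hhigh : 2 * |Real.sin u| ≤ 2 * |u| := by
        have : |Real.sin u| ≤ |u| := by
          have := Real.sin_sq_le_sq (x := u)
          nlinarith [abs_nonneg (Real.sin u), abs_nonneg u, sq_abs (Real.sin u), sq_abs u]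
        linarith
      have hpos : 0 < 2 * |Real.sin u| := lt_of_lt_of_le habs hlow
      have e1 : Real.log |u| ≤ Real.log |2 * Real.sin t| := by
        rw [hsin]; exact Real.log_le_log habs hlow
      have e2 : Real.log |2 * Real.sin t| ≤ Real.log 2 + Real.log |u| := by
        rw [hsin]
        calc Real.log (2 * |Real.sin u|) ≤ Real.log (2 * |u|) :=
              Real.log_le_log hpos hhigh
          _ = Real.log 2 + Real.log |u| := Real.log_mul (by norm_num) (ne_of_gt habs)
      rw [abs_le]
      constructor
      · linarith [neg_abs_le (Real.log |u|)]
      · linarith [le_abs_self (Real.log |u|)]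
  · -- sin x ≠ 0 : continuous near x
    have hU : IsOpen {t : ℝ | Real.sin t ≠ 0} :=
      isOpen_ne.preimage Real.continuous_sin
    have hcont : ContinuousOn (fun t : ℝ => Real.log |2 * Real.sin t|)
        {t : ℝ | Real.sin t ≠ 0} := by
      intro t ht
      refine (Real.continuousAt_log ?_).comp_continuousWithinAt
        ((continuous_abs.comp (continuous_const.mul Real.continuous_sin)).continuousWithinAt)
      simp only [ne_eq, abs_eq_zero, mul_eq_zero]
      push_neg
      exact ⟨by norm_num, ht⟩
    have := hcont.integrableAt_nhdsWithin (μ := volume) hU.measurableSet (by exact hs)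
    rwa [nhdsWithin_eq_nhds.2 (hU.mem_nhds hs)] at this

lemma key_integrable (a b : ℝ) :
    IntervalIntegrable (fun t => Real.log |2 * Real.sin t|) volume a b := by
  rw [intervalIntegrable_iff]
  exact (locallyIntegrable_f.integrableOn_isCompact isCompact_uIcc).mono_set
    Set.uIoc_subset_uIcc

/-- The Lobachevsky function `Λ(θ) = -∫₀^θ log |2 sin t| dt`. -/
noncomputable def lobachevsky (θ : ℝ) : ℝ :=
  -∫ t in (0:ℝ)..θ, Real.log |2 * Real.sin t|

/-- The Lobachevsky function is continuous on all of ℝ. -/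
theorem lobachevsky_continuous : Continuous lobachevsky := by
  unfold lobachevsky
  exact (intervalIntegral.continuous_primitive key_integrable 0).neg
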